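/- arXiv:1807.07888 — 2 statements merged into one kernel-verified Lean document; each statement's English description precedes it below -/
import Mathlib

section
/- The ring D of formal differential operators on k((t)) is a simple ring: its only two-sided ideals are {0} and D, where k is a field of characteristic 0. -/
set_option maxHeartbeats 1000000
set_option synthInstance.maxHeartbeats 1000000


/-- Shortcut instance, to help typeclass resolution for endomorphisms of Laurent series. -/
instance laurentAddCommGroup (k : Type*) [Field k] : AddCommGroup (LaurentSeries k) :=
  inferInstanceAs (AddCommGroup (HahnSeries ℤ k))

/-- Multiplication by a fixed Laurent series, as a `k`-linear endomorphism of `k((t))`. -/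
noncomputable def mulOp (k : Type*) [Field k] (a : LaurentSeries k) :
    Module.End k (LaurentSeries k) where
  toFun y := a * y
  map_add' := mul_add a
  map_smul' r y := by
    simp only [RingHom.id_apply, ← HahnSeries.C_mul_eq_smul]
    ring

/-- The formal derivative `∂ = d/dt`, as a `k`-linear endomorphism of `k((t))`. -/
noncomputable def derOp (k : Type*) [Field k] : Module.End k (LaurentSeries k) :=
  LaurentSeries.derivative k (V := k)

/-- The ring `D` of formal differential operators on `F = k((t))`: the `k`-subalgebra of
`End_k(k((t)))` generated by the multiplication operators `f·` for `f ∈ F` together with the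
formal derivative `∂ = d/dt`.  (This realizes the free `k`-algebra generated by `F` and the
symbol `∂`, modulo the relation `[∂, f] = f'`, acting faithfully on `F`.) -/
noncomputable def diffOps (k : Type*) [Field k] [CharZero k] :
    Subalgebra k (Module.End k (LaurentSeries k)) :=
  Algebra.adjoin k (Set.range (mulOp k) ∪ {derOp k})

/-- The multiplication operator `f·` as an element of `D`. -/
noncomputable def mulEl (k : Type*) [Field k] [CharZero k] (f : LaurentSeries k) :
    ↥(diffOps k) :=
  ⟨mulOp k f, Algebra.subset_adjoin (Set.mem_union_left _ (Set.mem_range_self f))⟩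

/-- The derivative `∂` as an element of `D`. -/
noncomputable def derEl (k : Type*) [Field k] [CharZero k] : ↥(diffOps k) :=
  ⟨derOp k, Algebra.subset_adjoin (Set.mem_union_right _ rfl)⟩

section Aux
variable (k : Type*) [Field k]

lemma mulOp_apply (a y : LaurentSeries k) : mulOp k a y = a * y := rfl

lemma mulOp_one : mulOp k 1 = 1 := by
  ext y; simp [mulOp_apply]

lemma mulOp_zero : mulOp k 0 = 0 := by
  ext y; simp [mulOp_apply]

lemma mulOp_mul (a b : LaurentSeries k) : mulOp k (a * b) = mulOp k a * mulOp k b := by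
  ext y; simp [mulOp_apply, Module.End.mul_apply, mul_assoc]

lemma mulOp_add (a b : LaurentSeries k) : mulOp k (a + b) = mulOp k a + mulOp k b := by
  ext y; simp [mulOp_apply, add_mul]

lemma mulOp_smul (c : k) (a : LaurentSeries k) : mulOp k (c • a) = c • mulOp k a := by
  refine LinearMap.ext fun y => ?_
  show (c • a) * y = c • (a * y)
  rw [← HahnSeries.C_mul_eq_smul, ← HahnSeries.C_mul_eq_smul, mul_assoc]

lemma mulOp_inj {a b : LaurentSeries k} (h : mulOp k a = mulOp k b) : a = b := by
  have := congrArg (fun P : Module.End k (LaurentSeries k) => P 1) h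
  simpa [mulOp_apply] using this

lemma derOp_coeff (f : LaurentSeries k) (n : ℤ) :
    (derOp k f).coeff n = (n + 1) • f.coeff (n + 1) := by
  show (LaurentSeries.derivative k (V := k) f).coeff n = _
  rw [LaurentSeries.derivative_apply, LaurentSeries.hasseDeriv_coeff]
  norm_num [Ring.choose_one_right]

lemma derOp_support_subset (f : LaurentSeries k) :
    (derOp k f).support ⊆ (fun i : ℤ => i - 1) '' f.support := by
  intro i hi
  rw [HahnSeries.mem_support, derOp_coeff] at hi
  have hne : f.coeff (i + 1) ≠ 0 := fun h => hi (by simp [h])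
  exact ⟨i + 1, hne, by ring⟩

lemma derOp_mul (f g : LaurentSeries k) :
    derOp k (f * g) = derOp k f * g + f * derOp k g := by
  ext n
  have hs : ((fun i : ℤ => i - 1) '' f.support).IsPWO :=
    f.isPWO_support.image_of_monotone (fun _ _ h => sub_le_sub_right h 1)
  have hs' : ((fun i : ℤ => i - 1) '' g.support).IsPWO :=
    g.isPWO_support.image_of_monotone (fun _ _ h => sub_le_sub_right h 1)
  rw [HahnSeries.coeff_add, derOp_coeff,
      HahnSeries.coeff_mul_left' hs (derOp_support_subset k f),
      HahnSeries.coeff_mul_right' hs' (derOp_support_subset k g),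
      HahnSeries.coeff_mul]
  have e1 : ∑ ij ∈ Finset.antidiagonal hs g.isPWO_support n,
        (derOp k f).coeff ij.1 * g.coeff ij.2
      = ∑ ij ∈ Finset.antidiagonal f.isPWO_support g.isPWO_support (n + 1),
        (ij.1 • (f.coeff ij.1)) * g.coeff ij.2 := by
    refine Finset.sum_nbij' (fun p => (p.1 + 1, p.2)) (fun p => (p.1 - 1, p.2)) ?_ ?_ ?_ ?_ ?_
    · rintro ⟨a, b⟩ hab
      simp only [Finset.mem_antidiagonal, Set.mem_image, HahnSeries.mem_support] at hab ⊢
      obtain ⟨⟨c, hc, hca⟩, hb, habn⟩ := hab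
      refine ⟨by rwa [show a + 1 = c by omega], hb, by omega⟩
    · rintro ⟨a, b⟩ hab
      simp only [Finset.mem_antidiagonal, Set.mem_image, HahnSeries.mem_support] at hab ⊢
      obtain ⟨ha, hb, habn⟩ := hab
      exact ⟨⟨a, ha, by ring⟩, hb, by omega⟩
    · rintro ⟨a, b⟩ _; simp
    · rintro ⟨a, b⟩ _; simp
    · rintro ⟨a, b⟩ _
      simp only [derOp_coeff]
  have e2 : ∑ ij ∈ Finset.antidiagonal f.isPWO_support hs' n,
        f.coeff ij.1 * (derOp k g).coeff ij.2
      = ∑ ij ∈ Finset.antidiagonal f.isPWO_support g.isPWO_support (n + 1),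
        f.coeff ij.1 * (ij.2 • g.coeff ij.2) := by
    refine Finset.sum_nbij' (fun p => (p.1, p.2 + 1)) (fun p => (p.1, p.2 - 1)) ?_ ?_ ?_ ?_ ?_
    · rintro ⟨a, b⟩ hab
      simp only [Finset.mem_antidiagonal, Set.mem_image, HahnSeries.mem_support] at hab ⊢
      obtain ⟨ha, ⟨c, hc, hcb⟩, habn⟩ := hab
      refine ⟨ha, by rwa [show b + 1 = c by omega], by omega⟩
    · rintro ⟨a, b⟩ hab
      simp only [Finset.mem_antidiagonal, Set.mem_image, HahnSeries.mem_support] at hab ⊢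
      obtain ⟨ha, hb, habn⟩ := hab
      exact ⟨ha, ⟨b, hb, by ring⟩, by omega⟩
    · rintro ⟨a, b⟩ _; simp
    · rintro ⟨a, b⟩ _; simp
    · rintro ⟨a, b⟩ _
      simp only [derOp_coeff]
  rw [e1, e2, ← Finset.sum_add_distrib, Finset.smul_sum]
  refine Finset.sum_congr rfl ?_
  rintro ⟨a, b⟩ hab
  simp only [Finset.mem_antidiagonal] at hab
  have : a + b = n + 1 := hab.2.2
  rw [smul_mul_assoc, mul_smul_comm, ← add_smul, this]

lemma derOp_mulOp (f : LaurentSeries k) :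
    derOp k * mulOp k f = mulOp k f * derOp k + mulOp k (derOp k f) := by
  refine LinearMap.ext fun y => ?_
  show derOp k (f * y) = f * derOp k y + (derOp k f) * y
  rw [derOp_mul, add_comm]

/-- The span of all monomials `mulOp f * derOp^n`. -/
noncomputable def Wall : Submodule k (Module.End k (LaurentSeries k)) :=
  Submodule.span k {Q | ∃ (f : LaurentSeries k) (n : ℕ), Q = mulOp k f * (derOp k)^n}

lemma mem_Wall_of (f : LaurentSeries k) (n : ℕ) : mulOp k f * (derOp k)^n ∈ Wall k :=
  Submodule.subset_span ⟨f, n, rfl⟩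

lemma derOp_mul_Wall {Q} (hQ : Q ∈ Wall k) : derOp k * Q ∈ Wall k := by
  induction hQ using Submodule.span_induction with
  | mem x hx =>
    obtain ⟨f, n, rfl⟩ := hx
    rw [← mul_assoc, derOp_mulOp, add_mul, mul_assoc, ← pow_succ']
    exact add_mem (mem_Wall_of k f (n+1)) (mem_Wall_of k _ n)
  | zero => rw [mul_zero]; exact zero_mem _
  | add x y _ _ hx hy => rw [mul_add]; exact add_mem hx hy
  | smul a x _ hx => rw [mul_smul_comm]; exact Submodule.smul_mem _ _ hx

lemma mulOp_mul_Wall (f : LaurentSeries k) {Q} (hQ : Q ∈ Wall k) : mulOp k f * Q ∈ Wall k := by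
  induction hQ using Submodule.span_induction with
  | mem x hx =>
    obtain ⟨g, n, rfl⟩ := hx
    rw [← mul_assoc, ← mulOp_mul]
    exact mem_Wall_of k _ n
  | zero => rw [mul_zero]; exact zero_mem _
  | add x y _ _ hx hy => rw [mul_add]; exact add_mem hx hy
  | smul a x _ hx => rw [mul_smul_comm]; exact Submodule.smul_mem _ _ hx

lemma pow_derOp_mul_Wall (n : ℕ) {Q} (hQ : Q ∈ Wall k) : (derOp k)^n * Q ∈ Wall k := by
  induction n with
  | zero => rw [pow_zero, one_mul]; exact hQ
  | succ m ih => rw [pow_succ', mul_assoc]; exact derOp_mul_Wall k ih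

lemma Wall_mul_Wall {P Q} (hP : P ∈ Wall k) (hQ : Q ∈ Wall k) : P * Q ∈ Wall k := by
  induction hP using Submodule.span_induction with
  | mem x hx =>
    obtain ⟨f, n, rfl⟩ := hx
    rw [mul_assoc]
    exact mulOp_mul_Wall k f (pow_derOp_mul_Wall k n hQ)
  | zero => rw [zero_mul]; exact zero_mem _
  | add x y _ _ hx hy => rw [add_mul]; exact add_mem hx hy
  | smul a x _ hx => rw [smul_mul_assoc]; exact Submodule.smul_mem _ _ hx

lemma one_mem_Wall : (1 : Module.End k (LaurentSeries k)) ∈ Wall k := by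
  have := mem_Wall_of k 1 0
  simpa [mulOp_one] using this

/-- `Wall` as a subalgebra. -/
noncomputable def WallAlg : Subalgebra k (Module.End k (LaurentSeries k)) :=
  (Wall k).toSubalgebra (one_mem_Wall k) (fun _ _ => Wall_mul_Wall k)

lemma diffOps_le_Wall [CharZero k] {P} (hP : P ∈ diffOps k) : P ∈ Wall k := by
  have : diffOps k ≤ WallAlg k := by
    apply Algebra.adjoin_le
    rintro Q (⟨f, rfl⟩ | rfl)
    · have := mem_Wall_of k f 0
      simpa [WallAlg, Submodule.mem_toSubalgebra] using this
    · have := mem_Wall_of k 1 1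
      simpa [WallAlg, Submodule.mem_toSubalgebra, mulOp_one] using this
  exact this hP

/-- Monomials of derivative-degree at most `N`. -/
noncomputable def WN (N : ℕ) : Submodule k (Module.End k (LaurentSeries k)) :=
  Submodule.span k {Q | ∃ (f : LaurentSeries k) (n : ℕ), n ≤ N ∧ Q = mulOp k f * (derOp k)^n}

lemma WN_mono {N M : ℕ} (h : N ≤ M) : WN k N ≤ WN k M :=
  Submodule.span_mono (fun _ ⟨f, n, hn, hq⟩ => ⟨f, n, hn.trans h, hq⟩)

lemma exists_WN {Q} (hQ : Q ∈ Wall k) : ∃ N, Q ∈ WN k N := by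
  induction hQ using Submodule.span_induction with
  | mem x hx =>
    obtain ⟨f, n, rfl⟩ := hx
    exact ⟨n, Submodule.subset_span ⟨f, n, le_rfl, rfl⟩⟩
  | zero => exact ⟨0, zero_mem _⟩
  | add x y _ _ hx hy =>
    obtain ⟨N, hN⟩ := hx; obtain ⟨M, hM⟩ := hy
    exact ⟨max N M, add_mem (WN_mono k (le_max_left _ _) hN) (WN_mono k (le_max_right _ _) hM)⟩
  | smul a x _ hx =>
    obtain ⟨N, hN⟩ := hx
    exact ⟨N, Submodule.smul_mem _ _ hN⟩

/-- The operator of multiplication by `t`. -/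
noncomputable def Tmul : Module.End k (LaurentSeries k) := mulOp k (HahnSeries.single 1 1)

lemma derOp_t : derOp k (HahnSeries.single 1 (1:k)) = 1 := by
  ext n
  rw [derOp_coeff]
  by_cases h : n = 0
  · subst h; simp [HahnSeries.coeff_single, HahnSeries.coeff_one]
  · simp [HahnSeries.coeff_single, HahnSeries.coeff_one, h, show n + 1 ≠ 1 by omega]

lemma derOp_Tmul : derOp k * Tmul k = Tmul k * derOp k + 1 := by
  rw [Tmul, derOp_mulOp, derOp_t, mulOp_one]

lemma Tmul_mulOp (f : LaurentSeries k) : Tmul k * mulOp k f = mulOp k f * Tmul k := by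
  rw [Tmul, ← mulOp_mul, ← mulOp_mul, mul_comm]

lemma pow_derOp_Tmul (n : ℕ) :
    (derOp k)^(n+1) * Tmul k = Tmul k * (derOp k)^(n+1) + (((n+1 : ℕ) : k)) • (derOp k)^n := by
  induction n with
  | zero => rw [pow_one, pow_zero, derOp_Tmul]; norm_num
  | succ m ih =>
    calc (derOp k)^(m+2) * Tmul k = derOp k * ((derOp k)^(m+1) * Tmul k) := by
          rw [← mul_assoc, ← pow_succ']
      _ = derOp k * (Tmul k * (derOp k)^(m+1))
            + ((m+1 : ℕ) : k) • (derOp k * (derOp k)^m) := by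
          rw [ih, mul_add, mul_smul_comm]
      _ = (Tmul k * derOp k + 1) * (derOp k)^(m+1) + ((m+1 : ℕ) : k) • (derOp k)^(m+1) := by
          rw [← mul_assoc, derOp_Tmul, ← pow_succ']
      _ = Tmul k * (derOp k)^(m+2) + ((m+2 : ℕ) : k) • (derOp k)^(m+1) := by
          rw [add_mul, one_mul, mul_assoc, ← pow_succ',
            show ((m+2:ℕ):k) = ((m+1:ℕ):k) + 1 by push_cast; ring, add_smul, one_smul]
          abel

/-- The commutator with `t`. -/
noncomputable def adE (Q : Module.End k (LaurentSeries k)) : Module.End k (LaurentSeries k) :=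
  Q * Tmul k - Tmul k * Q

lemma adE_WN {N : ℕ} {Q} (hQ : Q ∈ WN k (N+1)) : adE k Q ∈ WN k N := by
  induction hQ using Submodule.span_induction with
  | mem x hx =>
    obtain ⟨f, n, hn, rfl⟩ := hx
    match n, hn with
    | 0, _ =>
      have : adE k (mulOp k f * (derOp k)^0) = 0 := by
        rw [adE, pow_zero, mul_one, Tmul_mulOp, sub_self]
      rw [this]; exact zero_mem _
    | (m+1), hm =>
      have : adE k (mulOp k f * (derOp k)^(m+1))
          = ((m+1 : ℕ) : k) • (mulOp k f * (derOp k)^m) := by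
        rw [adE, mul_assoc, pow_derOp_Tmul, mul_add, mul_smul_comm, ← mul_assoc, ← Tmul_mulOp,
          ← mul_assoc]
        abel
      rw [this]
      exact Submodule.smul_mem _ _ (Submodule.subset_span ⟨f, m, by omega, rfl⟩)
  | zero =>
    have : adE k 0 = 0 := by rw [adE, zero_mul, mul_zero, sub_self]
    rw [this]; exact zero_mem _
  | add x y _ _ hx hy =>
    have : adE k (x + y) = adE k x + adE k y := by rw [adE, adE, adE, add_mul, mul_add]; abel
    rw [this]; exact add_mem hx hy
  | smul a x _ hx =>
    have : adE k (a • x) = a • adE k x := by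
      rw [adE, adE, smul_mul_assoc, mul_smul_comm, smul_sub]
    rw [this]; exact Submodule.smul_mem _ _ hx

/-- An operator is bounded if it shifts `t`-adic valuations by at most a fixed amount. -/
def IsBdd (P : Module.End k (LaurentSeries k)) : Prop :=
  ∃ c : ℤ, ∀ (x : LaurentSeries k) (m : ℤ), (∀ j, j < m → x.coeff j = 0) →
    ∀ j, j < m - c → (P x).coeff j = 0

lemma isBdd_mulOp (f : LaurentSeries k) : IsBdd k (mulOp k f) := by
  by_cases hf : f = 0
  · exact ⟨0, fun x m hx j hj => by simp [hf, mulOp_apply]⟩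
  · refine ⟨-f.order, fun x m hx j hj => ?_⟩
    rw [mulOp_apply]
    by_cases hx0 : x = 0
    · simp [hx0]
    · have hmo : m ≤ x.order := by
        by_contra h
        exact hx0 (HahnSeries.coeff_order_eq_zero.mp (hx x.order (by omega)))
      have hord : (f * x).order = f.order + x.order := HahnSeries.order_mul hf hx0
      apply HahnSeries.coeff_eq_zero_of_lt_order
      rw [hord]; omega

lemma isBdd_derOp : IsBdd k (derOp k) := by
  refine ⟨1, fun x m hx j hj => ?_⟩
  rw [derOp_coeff, hx (j+1) (by omega), smul_zero]

lemma isBdd_one : IsBdd k (1 : Module.End k (LaurentSeries k)) :=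
  ⟨0, fun x m hx j hj => by simpa using hx j (by omega)⟩

lemma isBdd_smul (c : k) {P} (hP : IsBdd k P) : IsBdd k (c • P) := by
  obtain ⟨cP, h⟩ := hP
  refine ⟨cP, fun x m hx j hj => ?_⟩
  rw [LinearMap.smul_apply, HahnSeries.coeff_smul, h x m hx j hj, smul_zero]

lemma isBdd_add {P Q} (hP : IsBdd k P) (hQ : IsBdd k Q) : IsBdd k (P + Q) := by
  obtain ⟨cP, h1⟩ := hP; obtain ⟨cQ, h2⟩ := hQ
  refine ⟨max cP cQ, fun x m hx j hj => ?_⟩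
  rw [LinearMap.add_apply, HahnSeries.coeff_add, h1 x m hx j (by omega),
    h2 x m hx j (by omega), add_zero]

lemma isBdd_mul {P Q} (hP : IsBdd k P) (hQ : IsBdd k Q) : IsBdd k (P * Q) := by
  obtain ⟨cP, h1⟩ := hP; obtain ⟨cQ, h2⟩ := hQ
  refine ⟨cP + cQ, fun x m hx j hj => ?_⟩
  rw [Module.End.mul_apply]
  exact h1 (Q x) (m - cQ) (fun j' hj' => h2 x m hx j' hj') j (by omega)

lemma diffOps_isBdd [CharZero k] {P} (hP : P ∈ diffOps k) : IsBdd k P := by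
  induction hP using Algebra.adjoin_induction with
  | mem x hx =>
    rcases hx with ⟨f, rfl⟩ | rfl
    · exact isBdd_mulOp k f
    · exact isBdd_derOp k
  | algebraMap r =>
    rw [Algebra.algebraMap_eq_smul_one]
    exact isBdd_smul k r (isBdd_one k)
  | add x y _ _ hx hy => exact isBdd_add k hx hy
  | mul x y _ _ hx hy => exact isBdd_mul k hx hy

lemma mulOp_pow (a : LaurentSeries k) (n : ℕ) : mulOp k (a^n) = (mulOp k a)^n := by
  induction n with
  | zero => rw [pow_zero, pow_zero, mulOp_one]
  | succ m ih => rw [pow_succ, pow_succ, mulOp_mul, ih]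

lemma single_one_pow (n : ℕ) :
    (HahnSeries.single (1:ℤ) (1:k))^n = HahnSeries.single (n:ℤ) 1 := by
  rw [HahnSeries.single_pow, one_pow, nsmul_eq_mul, mul_one]

lemma comm_single {P : Module.End k (LaurentSeries k)}
    (hP : P * Tmul k = Tmul k * P) (n : ℤ) :
    P * mulOp k (HahnSeries.single n 1) = mulOp k (HahnSeries.single n 1) * P := by
  have hnat : ∀ m : ℕ, P * mulOp k (HahnSeries.single (m:ℤ) 1)
      = mulOp k (HahnSeries.single (m:ℤ) 1) * P := by
    intro m
    rw [← single_one_pow, mulOp_pow]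
    exact ((Commute.pow_right (hP : Commute P (Tmul k)) m)).eq
  rcases n with m | m
  · exact hnat m
  · have hAB : mulOp k (HahnSeries.single (Int.negSucc m) (1:k))
        * mulOp k (HahnSeries.single ((m+1 : ℕ):ℤ) 1) = 1 := by
      rw [← mulOp_mul, HahnSeries.single_mul_single, one_mul,
        show (Int.negSucc m) + ((m+1 : ℕ):ℤ) = 0 by rw [Int.negSucc_eq]; push_cast; ring, HahnSeries.single_zero_one, mulOp_one]
    have hBA : mulOp k (HahnSeries.single ((m+1 : ℕ):ℤ) 1)
        * mulOp k (HahnSeries.single (Int.negSucc m) (1:k)) = 1 := by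
      rw [← mulOp_mul, HahnSeries.single_mul_single, one_mul,
        show ((m+1 : ℕ):ℤ) + (Int.negSucc m) = 0 by rw [Int.negSucc_eq]; push_cast; ring, HahnSeries.single_zero_one, mulOp_one]
    let u : (Module.End k (LaurentSeries k))ˣ :=
      ⟨mulOp k (HahnSeries.single ((m+1 : ℕ):ℤ) 1),
       mulOp k (HahnSeries.single (Int.negSucc m) (1:k)), hBA, hAB⟩
    have hu : Commute P (u : Module.End k (LaurentSeries k)) := hnat (m+1)
    exact (hu.units_inv_right : Commute P _).eq

lemma apply_single {P : Module.End k (LaurentSeries k)}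
    (hP : P * Tmul k = Tmul k * P) (n : ℤ) (c : k) :
    P (HahnSeries.single n c) = HahnSeries.single n c * P 1 := by
  have h := congrArg (fun Q : Module.End k (LaurentSeries k) => Q (HahnSeries.C c))
    (comm_single k hP n)
  simp only [Module.End.mul_apply, mulOp_apply] at h
  -- h : P (single n 1 * C c) = single n 1 * P (C c)
  have h1 : HahnSeries.single n (1:k) * HahnSeries.C c = HahnSeries.single n c := by
    rw [HahnSeries.C_apply, HahnSeries.single_mul_single, add_zero, one_mul]
  have h2 : (HahnSeries.C c : LaurentSeries k) = c • 1 := by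
    rw [← HahnSeries.C_mul_eq_smul, mul_one]
  rw [h1] at h
  rw [h, h2, map_smul, ← HahnSeries.C_mul_eq_smul, ← mul_assoc, h1]

lemma inter_Iio_finite (s : Set ℤ) (hs : s.IsPWO) (M : ℤ) : (s ∩ Set.Iio M).Finite := by
  rcases (s ∩ Set.Iio M).eq_empty_or_nonempty with h | h
  · simp [h]
  · have hwf : (s ∩ Set.Iio M).IsWF := (hs.isWF).mono Set.inter_subset_left
    refine BddBelow.finite_of_bddAbove ⟨hwf.min h, fun y hy => hwf.min_le h hy⟩
      ⟨M, fun y hy => le_of_lt hy.2⟩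

lemma eq_mulOp {P : Module.End k (LaurentSeries k)}
    (hB : IsBdd k P) (hP : P * Tmul k = Tmul k * P) :
    P = mulOp k (P 1) := by
  obtain ⟨c, hc⟩ := hB
  set g := P 1 with hg
  refine LinearMap.ext fun x => ?_
  rw [mulOp_apply]
  ext j
  set M : ℤ := max (j + c + 1) (j - g.order + 1) with hM
  set xlo : LaurentSeries k :=
    { coeff := fun i => if i < M then x.coeff i else 0
      isPWO_support' := x.isPWO_support.mono (fun i hi => by
        by_cases h : i < M <;> simp_all [Function.mem_support]) } with hxlo
  set xhi := x - xlo with hxhi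
  have hlo_coeff : ∀ i, xlo.coeff i = if i < M then x.coeff i else 0 := fun i => rfl
  have hhi : ∀ i, i < M → xhi.coeff i = 0 := by
    intro i hi
    rw [hxhi, HahnSeries.coeff_sub, hlo_coeff, if_pos hi, sub_self]
  have hx_eq : x = xlo + xhi := by rw [hxhi, add_sub_cancel]
  have hfin : xlo.support.Finite := by
    refine Set.Finite.subset (inter_Iio_finite x.support x.isPWO_support M) ?_
    intro i hi
    rw [HahnSeries.mem_support, hlo_coeff] at hi
    by_cases h : i < M
    · rw [if_pos h] at hi; exact ⟨hi, h⟩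
    · rw [if_neg h] at hi; exact absurd rfl hi
  have hsum : xlo = ∑ i ∈ hfin.toFinset, HahnSeries.single i (xlo.coeff i) := by
    ext jj
    have hcs : (∑ i ∈ hfin.toFinset, HahnSeries.single i (xlo.coeff i)).coeff jj
        = ∑ i ∈ hfin.toFinset, (HahnSeries.single i (xlo.coeff i)).coeff jj :=
      map_sum (HahnSeries.coeff.addMonoidHom jj) _ _
    by_cases h : jj ∈ hfin.toFinset
    · rw [hcs, Finset.sum_eq_single_of_mem jj h
        (fun b _ hb => by rw [HahnSeries.coeff_single, if_neg (fun hh => hb hh.symm)]),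
        HahnSeries.coeff_single_same]
    · have h0 : xlo.coeff jj = 0 := by
        by_contra hne; exact h (hfin.mem_toFinset.mpr hne)
      rw [h0, hcs, Finset.sum_eq_zero]
      intro b hb
      rw [HahnSeries.coeff_single, if_neg (fun hh => h (by rwa [hh]))]
  have hPlo : P xlo = g * xlo := by
    conv_lhs => rw [hsum]
    rw [map_sum]
    conv_rhs => rw [hsum, Finset.mul_sum]
    refine Finset.sum_congr rfl fun i _ => ?_
    rw [apply_single k hP, mul_comm, hg]
  have hPhi : (P xhi).coeff j = 0 := by
    refine hc xhi M hhi j (by omega)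
  have hghi : (g * xhi).coeff j = 0 := by
    by_cases hg0 : g = 0
    · simp [hg0]
    by_cases hx0 : xhi = 0
    · simp [hx0]
    have hmo : M ≤ xhi.order := by
      by_contra h
      exact hx0 (HahnSeries.coeff_order_eq_zero.mp (hhi xhi.order (by omega)))
    have hord : (g * xhi).order = g.order + xhi.order := HahnSeries.order_mul hg0 hx0
    apply HahnSeries.coeff_eq_zero_of_lt_order
    rw [hord]; omega
  have hsplit : P x = P xlo + P xhi := by rw [← map_add, ← hx_eq]
  have hsplit2 : g * x = g * xlo + g * xhi := by rw [← mul_add, ← hx_eq]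
  rw [hsplit, HahnSeries.coeff_add, hPhi, add_zero, hPlo, hsplit2, HahnSeries.coeff_add,
    hghi, add_zero]

lemma mem_WN_zero {Q} (hQ : Q ∈ WN k 0) : ∃ f, Q = mulOp k f := by
  induction hQ using Submodule.span_induction with
  | mem x hx =>
    obtain ⟨f, n, hn, rfl⟩ := hx
    interval_cases n
    exact ⟨f, by rw [pow_zero, mul_one]⟩
  | zero => exact ⟨0, (mulOp_zero k).symm⟩
  | add x y _ _ hx hy =>
    obtain ⟨f, rfl⟩ := hx; obtain ⟨g, rfl⟩ := hy
    exact ⟨f + g, (mulOp_add k f g).symm⟩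
  | smul a x _ hx =>
    obtain ⟨f, rfl⟩ := hx
    exact ⟨a • f, (mulOp_smul k a f).symm⟩

lemma finish_top [CharZero k] (I : TwoSidedIdeal ↥(diffOps k)) {P : ↥(diffOps k)}
    (hPI : P ∈ I) (hP0 : P ≠ 0) {g : LaurentSeries k}
    (hg : (P : Module.End k (LaurentSeries k)) = mulOp k g) : I = ⊤ := by
  have hgne : g ≠ 0 := by
    intro h
    exact hP0 (Subtype.ext (by rw [hg, h, mulOp_zero]; rfl))
  have hone : mulEl k g⁻¹ * P = 1 := by
    refine Subtype.ext ?_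
    show mulOp k g⁻¹ * (P : Module.End k (LaurentSeries k)) = 1
    rw [hg, ← mulOp_mul, inv_mul_cancel₀ hgne, mulOp_one]
  have h1 : (1 : ↥(diffOps k)) ∈ I := by
    rw [← hone]
    exact I.mul_mem_left _ _ hPI
  exact TwoSidedIdeal.one_mem_iff I |>.mp h1

end Aux

/-- The ring `D` of formal differential operators on `k((t))` (char k = 0) is a
simple ring: its only two-sided ideals are `{0}` and `D`. -/
theorem diffOps_simple (k : Type*) [Field k] [CharZero k]
    (I : TwoSidedIdeal ↥(diffOps k)) : I = ⊥ ∨ I = ⊤ := by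
  by_cases hbot : I = ⊥
  · exact Or.inl hbot
  right
  have hex : ∃ P : ↥(diffOps k), P ∈ I ∧ P ≠ 0 := by
    by_contra h
    push_neg at h
    apply hbot
    refine SetLike.ext fun x => ?_
    rw [TwoSidedIdeal.mem_bot]
    exact ⟨fun hx => h x hx, fun hx => by rw [hx]; exact I.zero_mem⟩
  obtain ⟨P, hPI, hP0⟩ := hex
  obtain ⟨N, hN⟩ := exists_WN k (diffOps_le_Wall k P.2)
  suffices key : ∀ (N : ℕ) (P : ↥(diffOps k)), P ∈ I → P ≠ 0 →
      (P : Module.End k (LaurentSeries k)) ∈ WN k N → I = ⊤ from key N P hPI hP0 hN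
  intro N
  induction N with
  | zero =>
    intro P hPI hP0 hWN
    obtain ⟨g, hg⟩ := mem_WN_zero k hWN
    exact finish_top k I hPI hP0 hg
  | succ N ih =>
    intro P hPI hP0 hWN
    set Tel : ↥(diffOps k) := mulEl k (HahnSeries.single 1 1) with hTel
    set Q : ↥(diffOps k) := P * Tel - Tel * P with hQdef
    have hQI : Q ∈ I := I.sub_mem (I.mul_mem_right _ _ hPI) (I.mul_mem_left _ _ hPI)
    have hQval : (Q : Module.End k (LaurentSeries k))
        = adE k (P : Module.End k (LaurentSeries k)) := rfl
    by_cases hQ0 : Q = 0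
    · have hcomm : (P : Module.End k (LaurentSeries k)) * Tmul k
          = Tmul k * (P : Module.End k (LaurentSeries k)) := by
        have := congrArg (Subtype.val) hQ0
        rw [hQdef] at this
        have h2 : (P : Module.End k (LaurentSeries k)) * Tmul k
            - Tmul k * (P : Module.End k (LaurentSeries k)) = 0 := this
        linear_combination (norm := noncomm_ring) h2
      have hg := eq_mulOp k (diffOps_isBdd k P.2) hcomm
      exact finish_top k I hPI hP0 hg
    · exact ih Q hQI hQ0 (hQval ▸ adE_WN k hWN)
end

section
/- (Cyclic Vector Lemma) Let (E, ∇) be a flat connection on F = k((t)) with k of characteristic 0, i.e., E is a finite-dimensional F-vector space with a D-module structure where D is the ring of differential operators on F. Then E admits a cyclic vector: there exists s ∈ E with D·s = E. -/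
set_option linter.unusedSectionVars false
open Polynomial
section
variable {K : Type*} [Field K]
noncomputable def poldel (d : K →+ K) (p : K[X]) : K[X] := ⟨AddMonoidAlgebra.ofCoeff (p.toFinsupp.coeff.mapRange ⇑d (map_zero d))⟩
variable (d : K →+ K)
lemma coeff_poldel (p : K[X]) (m : ℕ) : (poldel d p).coeff m = d (p.coeff m) := rfl
lemma poldel_add (p q : K[X]) : poldel d (p+q) = poldel d p + poldel d q := by
  ext m; simp [coeff_poldel, map_add]
variable (hleib : ∀ a b, d (a*b) = d a * b + a * d b)
include hleib
lemma d_one : d 1 = 0 := by have := hleib 1 1; simpa using this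
lemma d_inv (a : K) (ha : d a = 0) : d a⁻¹ = 0 := by
  rcases eq_or_ne a 0 with rfl | h
  · simp
  · have h1 := hleib a a⁻¹
    rw [mul_inv_cancel₀ h, d_one d hleib, ha, zero_mul, zero_add] at h1
    have := h1.symm
    rwa [mul_eq_zero, or_iff_right h] at this
lemma d_nat (m : ℕ) : d (m : K) = 0 := by
  induction m with
  | zero => simp
  | succ m ih => rw [Nat.cast_succ, map_add, ih, d_one d hleib, add_zero]
lemma poldel_mul (p q : K[X]) : poldel d (p*q) = poldel d p * q + p * poldel d q := by
  ext m
  rw [coeff_add, coeff_poldel, coeff_mul, coeff_mul, coeff_mul, map_sum, ← Finset.sum_add_distrib]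
  exact Finset.sum_congr rfl fun x _ => by rw [coeff_poldel, coeff_poldel, hleib]
omit hleib in
lemma poldel_C (a : K) : poldel d (C a) = C (d a) := by
  ext m; rw [coeff_poldel]
  rcases eq_or_ne m 0 with rfl | h
  · simp
  · simp [coeff_C, h]

lemma poldel_X : poldel d (X : K[X]) = 0 := by
  ext m; rw [coeff_poldel, coeff_X]
  split_ifs with h
  · exact d_one d hleib
  · simp
lemma poldel_pow (y : K[X]) (m : ℕ) : poldel d (y^(m+1)) = (m+1 : K[X]) * (poldel d y * y^m) := by
  induction m with
  | zero => simp [poldel_mul d hleib]  -- y^1 = y? 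
  | succ m ih =>
    rw [pow_succ, poldel_mul d hleib, ih, pow_succ]
    push_cast
    ring

omit hleib

variable {n : ℕ} (A : Matrix (Fin n) (Fin n) K)

/-- connection in coordinates -/
noncomputable def nab : (Fin n → K) →+ (Fin n → K) :=
  AddMonoidHom.mk' (fun u => fun i => d (u i) + ∑ j, A i j * u j) (by
    intro u v; ext i; simp [map_add, mul_add, Finset.sum_add_distrib]; try ring)

lemma nab_apply (u : Fin n → K) (i : Fin n) :
    nab d A u i = d (u i) + ∑ j, A i j * u j := rfl

/-- basis vectors extended by zero -/
def ee (n : ℕ) (m : ℕ) : Fin n → K := fun i => if (i : ℕ) = m then 1 else 0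

noncomputable def vv (p j : ℕ) : Fin n → K :=
  ∑ i ∈ Finset.range (j+1), ((-1:ℤ)^i * (j.choose i : ℤ)) • (⇑(nab d A))^[i] (ee n (j + p - i))

lemma vv_rec (p j : ℕ) : vv d A p (j+1) = vv d A (p+1) j - nab d A (vv d A p j) := by
  have hN : ∀ (c : ℤ) (x : Fin n → K), nab d A (c • x) = c • nab d A x := fun c x => map_zsmul _ c x
  have hsub : ∀ i, j + 1 + p - (i+1) = j + p - i := fun i => by omega
  rw [vv, Finset.sum_range_succ']
  have expand : ∀ i ∈ Finset.range (j+1),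
      ((-1:ℤ)^(i+1) * (((j+1).choose (i+1) : ℤ))) • (⇑(nab d A))^[i+1] (ee n (j + 1 + p - (i+1)))
      = ((-1:ℤ)^(i+1) * ((j.choose (i+1) : ℤ))) • (⇑(nab d A))^[i+1] (ee n (j + 1 + p - (i+1)))
        - ((-1:ℤ)^i * ((j.choose i : ℤ))) • nab d A ((⇑(nab d A))^[i] (ee n (j + p - i))) := by
    intro i _
    rw [← Function.iterate_succ_apply' (⇑(nab d A)) i, hsub i, sub_eq_add_neg, ← neg_smul, ← add_smul]
    congr 1
    rw [Nat.choose_succ_succ]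
    push_cast
    ring
  rw [Finset.sum_congr rfl expand, Finset.sum_sub_distrib]
  have S1 : (∑ i ∈ Finset.range (j+1),
      ((-1:ℤ)^(i+1) * ((j.choose (i+1) : ℤ))) • (⇑(nab d A))^[i+1] (ee n (j + 1 + p - (i+1))))
      + ((-1:ℤ)^0 * (((j+1).choose 0 : ℤ))) • (⇑(nab d A))^[0] (ee n (j + 1 + p - 0))
      = vv d A (p+1) j := by
    rw [show ((-1:ℤ)^0 * (((j+1).choose 0 : ℤ))) = ((-1:ℤ)^0 * ((j.choose 0 : ℤ))) by simp,
      ← Finset.sum_range_succ' (fun i => ((-1:ℤ)^i * ((j.choose i : ℤ))) • (⇑(nab d A))^[i] (ee n (j + 1 + p - i))) (j+1)]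
    rw [vv, Finset.sum_range_succ, Nat.choose_succ_self]
    simp only [Int.ofNat_zero, mul_zero, zero_smul, add_zero, Nat.cast_zero]
    apply Finset.sum_congr rfl
    intro i hi
    have h : j+1+p-i = j+(p+1)-i := by omega
    rw [h]
  have S2 : (∑ i ∈ Finset.range (j+1),
      ((-1:ℤ)^i * ((j.choose i : ℤ))) • nab d A ((⇑(nab d A))^[i] (ee n (j + p - i))))
      = nab d A (vv d A p j) := by
    rw [vv, map_sum]
    exact Finset.sum_congr rfl fun i _ => (hN _ _).symm
  rw [sub_add_eq_add_sub, S1, S2]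


variable (t : K)

noncomputable def iotaC (z : Fin n → K) : Fin n → K[X] := fun i => C (z i)

noncomputable def nabX (u : Fin n → K[X]) : Fin n → K[X] :=
  fun i => poldel d (u i) + ∑ j, C (A i j) * u j

lemma nabX_add (u v : Fin n → K[X]) : nabX d A (u + v) = nabX d A u + nabX d A v := by
  ext i
  simp only [nabX, Pi.add_apply, poldel_add, mul_add, Finset.sum_add_distrib]
  try ring

lemma nabX_iotaC (z : Fin n → K) : nabX d A (iotaC z) = iotaC (nab d A z) := by
  ext i
  simp only [nabX, iotaC, nab_apply, poldel_C, map_add, map_sum, map_mul]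

lemma nabX_smul (hleib : ∀ a b, d (a*b) = d a * b + a * d b) (q : K[X]) (u : Fin n → K[X]) :
    nabX d A (q • u) = poldel d q • u + q • nabX d A u := by
  ext i
  have hs : ∑ j, C (A i j) * (q * u j) = ∑ j, q * (C (A i j) * u j) :=
    Finset.sum_congr rfl fun j _ => by ring
  simp only [nabX, Pi.smul_apply, smul_eq_mul, Pi.add_apply, poldel_mul d hleib]
  rw [hs, mul_add, Finset.mul_sum]
  ring

/-- `(t - X)^j / j!` -/
noncomputable def qq (t : K) (j : ℕ) : K[X] := C (((j.factorial : K))⁻¹) * (C t - X)^j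

lemma qq_zero : qq (K := K) t 0 = 1 := by simp [qq]

lemma poldel_qq (hleib : ∀ a b, d (a*b) = d a * b + a * d b)
    (htt : d t = 1) [CharZero K] (j : ℕ) :
    poldel d (qq t (j+1)) = qq t j := by
  have hfac : d (((j+1).factorial : K))⁻¹ = 0 :=
    d_inv d hleib _ (d_nat d hleib _)
  have hbase : poldel d (C t - X) = 1 := by
    rw [show C t - X = C t + (-1) * X by ring, poldel_add, poldel_C, htt]
    have : poldel d ((-1 : K[X]) * X) = poldel d (-1) * X + (-1) * poldel d X := poldel_mul d hleib _ _
    rw [this, poldel_X d hleib, show (-1 : K[X]) = C (-1) by simp, poldel_C]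
    simp [d_one d hleib]
  rw [qq, poldel_mul d hleib, poldel_C, hfac, map_zero, zero_mul, zero_add,
    poldel_pow d hleib, hbase, qq]
  have hc : ((j : K[X]) + 1) = C ((j:K) + 1) := by rw [map_add, C_1, C_eq_natCast]
  rw [one_mul, hc, ← mul_assoc, ← map_mul]
  congr 2
  have h1 : ((j+1).factorial : K) = ((j:K) + 1) * (j.factorial : K) := by
    rw [Nat.factorial_succ]; push_cast; ring
  have h2 : ((j:K) + 1) ≠ 0 := by
    have : ((j+1:ℕ) : K) ≠ 0 := Nat.cast_ne_zero.mpr (by omega)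
    push_cast at this; exact this
  have h3 : (j.factorial : K) ≠ 0 := Nat.cast_ne_zero.mpr j.factorial_ne_zero
  rw [h1]
  field_simp

noncomputable def WW (p : ℕ) : Fin n → K[X] :=
  ∑ j ∈ Finset.range (n - p), qq t j • iotaC (vv d A p j)

lemma keyW (hleib : ∀ a b, d (a*b) = d a * b + a * d b)
    (htt : d t = 1) [CharZero K]
    (p : ℕ) (hp : p + 1 ≤ n) :
    nabX d A (WW d A t p) = WW d A t (p+1)
      + qq t (n-1-p) • iotaC (nab d A (vv d A p (n-1-p))) := by
  obtain ⟨m, hm⟩ : ∃ m, n - p = m + 1 := ⟨n - p - 1, by omega⟩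
  have hm2 : n - (p+1) = m := by omega
  have hm3 : n - 1 - p = m := by omega
  rw [WW, hm]
  -- nabX of a finite sum
  have hsum : ∀ (F : ℕ → (Fin n → K[X])) (N : ℕ),
      nabX d A (∑ j ∈ Finset.range N, F j) = ∑ j ∈ Finset.range N, nabX d A (F j) := by
    intro F N
    induction N with
    | zero => ext i; simp [nabX, map_zero, poldel]
    | succ N ih => rw [Finset.sum_range_succ, Finset.sum_range_succ, nabX_add, ih]
  rw [hsum]
  have expand : ∀ j ∈ Finset.range (m+1), nabX d A (qq t j • iotaC (vv d A p j))
      = poldel d (qq t j) • iotaC (vv d A p j) + qq t j • iotaC (nab d A (vv d A p j)) := by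
    intro j _
    rw [nabX_smul d A hleib, nabX_iotaC]
  rw [Finset.sum_congr rfl expand]
  rw [Finset.sum_add_distrib]
  -- first sum: drop j = 0, reindex
  have first : (∑ j ∈ Finset.range (m+1), poldel d (qq t j) • iotaC (vv d A p j))
      = ∑ j ∈ Finset.range m, qq t j • iotaC (vv d A p (j+1)) := by
    rw [Finset.sum_range_succ']
    rw [show poldel d (qq (K := K) t 0) = 0 by
      rw [qq_zero]; ext i; rw [show (1 : K[X]) = C 1 by simp, poldel_C, d_one d hleib, map_zero]]
    rw [zero_smul, add_zero]
    exact Finset.sum_congr rfl fun j _ => by rw [poldel_qq d t hleib htt]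
  rw [first, Finset.sum_range_succ, hm3]
  have hvv : ∀ j, iotaC (vv d A p (j+1)) + iotaC (nab d A (vv d A p j)) = iotaC (vv d A (p+1) j) := by
    intro j
    have h : vv d A p (j+1) + nab d A (vv d A p j) = vv d A (p+1) j := by
      rw [vv_rec]; abel
    rw [← h]; ext i; simp [iotaC]
  have comb : (∑ j ∈ Finset.range m, qq t j • iotaC (vv d A p (j+1)))
      + ∑ j ∈ Finset.range m, qq t j • iotaC (nab d A (vv d A p j)) = WW d A t (p+1) := by
    rw [← Finset.sum_add_distrib, WW, hm2]
    apply Finset.sum_congr rfl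
    intro j hj
    rw [← smul_add, hvv j]
  rw [← comb]
  abel

/-- divisibility by `(X - C t)^m` componentwise -/
def SSmem (t : K) (m : ℕ) (u : Fin n → K[X]) : Prop := ∀ i, (X - C t)^m ∣ u i

lemma SS_zero (m : ℕ) : SSmem (n := n) t m 0 := fun i => dvd_zero _

lemma SS_add {m : ℕ} {u v : Fin n → K[X]} (hu : SSmem t m u) (hv : SSmem t m v) :
    SSmem t m (u + v) := fun i => dvd_add (hu i) (hv i)

lemma SS_mono {m m' : ℕ} (h : m' ≤ m) {u : Fin n → K[X]} (hu : SSmem t m u) :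
    SSmem t m' u := fun i => (pow_dvd_pow _ h).trans (hu i)

lemma SS_qq_smul (j : ℕ) (z : Fin n → K) : SSmem t j (qq t j • iotaC z) := by
  intro i
  refine ⟨C ((j.factorial : K))⁻¹ * (-1)^j * C (z i), ?_⟩
  simp only [Pi.smul_apply, smul_eq_mul, qq, iotaC]
  rw [show (C t - X : K[X]) = (-1) * (X - C t) by ring, mul_pow]
  ring

lemma SS_nabX (hleib : ∀ a b, d (a*b) = d a * b + a * d b) {m : ℕ} {u : Fin n → K[X]}
    (hu : SSmem t (m+1) u) : SSmem t m (nabX d A u) := by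
  intro i
  apply dvd_add
  · obtain ⟨w, hw⟩ := hu i
    rw [hw, poldel_mul d hleib, poldel_pow d hleib]
    apply dvd_add
    · exact ⟨(↑m+1) * poldel d (X - C t) * w, by ring⟩
    · exact ⟨(X - C t) * poldel d w, by ring⟩
  · apply Finset.dvd_sum
    intro j _
    obtain ⟨w, hw⟩ := hu j
    exact ⟨(X - C t) * (C (A i j) * w), by rw [hw]; ring⟩

lemma errlem (hleib : ∀ a b, d (a*b) = d a * b + a * d b)
    (htt : d t = 1) [CharZero K] :
    ∀ p, p ≤ n → ∃ err, SSmem t (n - p) err ∧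
      (nabX d A)^[p] (WW d A t 0) = WW d A t p + err := by
  intro p
  induction p with
  | zero => exact fun _ => ⟨0, SS_zero t _, by simp⟩
  | succ p ih =>
    intro hp
    obtain ⟨err, herr, heq⟩ := ih (by omega)
    refine ⟨qq t (n-1-p) • iotaC (nab d A (vv d A p (n-1-p))) + nabX d A err, ?_, ?_⟩
    · apply SS_add
      · exact SS_mono t (by omega) (SS_qq_smul t _ _)
      · have h1 : SSmem t ((n - (p+1)) + 1) err := by
          rw [show (n - (p+1)) + 1 = n - p by omega]; exact herr
        exact SS_nabX d A t hleib h1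
    · rw [Function.iterate_succ_apply', heq, nabX_add, keyW d A t hleib htt p hp]
      abel


lemma vv_p_zero (p : ℕ) : vv d A p 0 = ee n p := by
  simp [vv]

lemma evalt_WW (p : ℕ) (hp : p < n) (i : Fin n) :
    eval t (WW d A t p i) = ee n p i := by
  obtain ⟨m, hm⟩ : ∃ m, n - p = m + 1 := ⟨n - p - 1, by omega⟩
  rw [WW, hm, ← vv_p_zero d A p]
  rw [show (∑ j ∈ Finset.range (m+1), qq t j • iotaC (vv d A p j)) i
      = ∑ j ∈ Finset.range (m+1), qq t j * C (vv d A p j i) from by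
    rw [Finset.sum_apply]; exact Finset.sum_congr rfl fun j _ => rfl]
  rw [eval_finset_sum, Finset.sum_range_succ']
  have h0 : eval t (qq t 0 * C (vv d A p 0 i)) = vv d A p 0 i := by
    rw [qq_zero, one_mul, eval_C]
  have hrest : ∀ j, eval t (qq t (j+1) * C (vv d A p (j+1) i)) = 0 := by
    intro j
    have hz : eval t ((C t - X : K[X])^(j+1)) = 0 := by
      rw [eval_pow, eval_sub, eval_C, eval_X, sub_self, zero_pow (by omega)]
    rw [qq, eval_mul, eval_mul, hz, mul_zero, zero_mul]
  rw [h0, Finset.sum_congr rfl fun j _ => hrest j]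
  simp

lemma evalt_SS {m : ℕ} (hm : 1 ≤ m) {u : Fin n → K[X]} (hu : SSmem t m u) (i : Fin n) :
    eval t (u i) = 0 := by
  obtain ⟨w, hw⟩ := hu i
  rw [hw, eval_mul, eval_pow, eval_sub, eval_X, eval_C, sub_self, zero_pow (by omega), zero_mul]

lemma dpow (hleib : ∀ a b, d (a*b) = d a * b + a * d b) {c : K} (hc : d c = 0) (m : ℕ) :
    d (c^m) = 0 := by
  induction m with
  | zero => simpa using d_one d hleib
  | succ m ih => rw [pow_succ, hleib, ih, hc, zero_mul, mul_zero, add_zero]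

lemma dc_eval (hleib : ∀ a b, d (a*b) = d a * b + a * d b) {c : K} (hc : d c = 0) (p : K[X]) :
    d (eval c p) = eval c (poldel d p) := by
  induction p using Polynomial.induction_on' with
  | add p q hp hq => rw [eval_add, map_add, hp, hq, poldel_add, eval_add]
  | monomial m a =>
    have hpm : poldel d (monomial m a) = monomial m (d a) := by
      ext i
      rw [coeff_poldel, coeff_monomial, coeff_monomial]
      split_ifs <;> simp
    rw [hpm, eval_monomial, eval_monomial, hleib, dpow d hleib hc, mul_zero, add_zero]

lemma evc_nabX (hleib : ∀ a b, d (a*b) = d a * b + a * d b) {c : K} (hc : d c = 0)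
    (u : Fin n → K[X]) :
    (fun i => eval c (nabX d A u i)) = nab d A (fun i => eval c (u i)) := by
  ext i
  rw [nabX, nab_apply]
  simp only [eval_add, eval_finset_sum, eval_mul, eval_C, dc_eval d hleib hc]

lemma evc_nabX_iter (hleib : ∀ a b, d (a*b) = d a * b + a * d b) {c : K} (hc : d c = 0)
    (u : Fin n → K[X]) (p : ℕ) :
    (fun i => eval c ((nabX d A)^[p] u i)) = (⇑(nab d A))^[p] (fun i => eval c (u i)) := by
  induction p with
  | zero => rfl
  | succ p ih =>
    rw [Function.iterate_succ_apply', Function.iterate_succ_apply',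
      evc_nabX d A hleib hc, ih]

/-- The core lemma in coordinates. -/
lemma core (hleib : ∀ a b, d (a*b) = d a * b + a * d b)
    (htt : d t = 1) [CharZero K] :
    ∃ z : Fin n → K,
      Submodule.span K (Set.range fun p : Fin n => (⇑(nab d A))^[(p : ℕ)] z) = ⊤ := by
  classical
  set MM : Matrix (Fin n) (Fin n) K[X] :=
    Matrix.of (fun i p : Fin n => (nabX d A)^[(p : ℕ)] (WW d A t 0) i) with hMM
  -- eval at t gives the identity matrix
  have hMMt : MM.map (eval t) = 1 := by
    ext i p
    obtain ⟨err, herr, heq⟩ := errlem d A t hleib htt (p : ℕ) (le_of_lt p.isLt)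
    have h1 : eval t (MM i p) = eval t (WW d A t p i) + eval t (err i) := by
      rw [hMM]
      simp only [Matrix.of_apply, heq]
      rw [show (WW d A t p + err) i = WW d A t p i + err i from rfl, eval_add]
    rw [Matrix.map_apply, h1, evalt_WW d A t p p.isLt,
      evalt_SS t (by omega) herr, add_zero, Matrix.one_apply, ee]
    simp [Fin.ext_iff]
  have hdet : MM.det ≠ 0 := by
    intro h0
    have h1 : eval t MM.det = (MM.map (eval t)).det := by
      have h2 := RingHom.map_det (Polynomial.evalRingHom t) MM
      simpa using h2
    rw [h0, hMMt, Matrix.det_one] at h1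
    simp at h1
  -- find λ in k avoiding the roots
  have hroots : {x : K | MM.det.IsRoot x}.Finite := by
    refine Set.Finite.subset (MM.det.roots.toFinset : Finset K).finite_toSet ?_
    intro x hx
    simp only [Finset.coe_sort_coe, Multiset.mem_toFinset, Finset.mem_coe]
    rw [mem_roots hdet]
    exact hx
  have hinj : Function.Injective (fun m : ℕ => (m : K)) := fun a b hab => Nat.cast_injective hab
  obtain ⟨lam, hlam⟩ : ∃ lam : ℕ, ¬ MM.det.IsRoot ((lam : K)) := by
    have hfin : {lam : ℕ | MM.det.IsRoot ((lam : K))}.Finite :=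
      Set.Finite.preimage (Set.injOn_of_injective hinj) hroots
    obtain ⟨lam, hlam⟩ := hfin.infinite_compl.nonempty
    exact ⟨lam, hlam⟩
  set c : K := (lam : K) with hcdef
  have hc : d c = 0 := d_nat d hleib lam
  set z : Fin n → K := fun i => eval c (WW d A t 0 i) with hz
  refine ⟨z, ?_⟩
  set MK : Matrix (Fin n) (Fin n) K := MM.map (eval c) with hMK
  have hdetK : IsUnit MK.det := by
    have h1 : MK.det = eval c MM.det := by
      have h2 := RingHom.map_det (Polynomial.evalRingHom c) MM
      rw [hMK]
      simpa using h2.symm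
    rw [h1]
    exact isUnit_iff_ne_zero.mpr hlam
  have hcol : ∀ p : Fin n, (⇑(nab d A))^[(p : ℕ)] z = fun i => MK i p := by
    intro p
    rw [hz, ← evc_nabX_iter d A hleib hc]
    rfl
  rw [eq_top_iff]
  intro y _
  have hy : y = MK.mulVec ((MK⁻¹).mulVec y) := by
    rw [Matrix.mulVec_mulVec, Matrix.mul_nonsing_inv _ hdetK, Matrix.one_mulVec]
  have hy2 : y = ∑ p : Fin n, ((MK⁻¹).mulVec y) p • (⇑(nab d A))^[(p : ℕ)] z := by
    conv_lhs => rw [hy]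
    ext i
    rw [Finset.sum_apply, Matrix.mulVec, dotProduct]
    exact Finset.sum_congr rfl fun p _ => by rw [hcol p, Pi.smul_apply, smul_eq_mul, mul_comm]
  rw [hy2]
  exact Submodule.sum_mem _ fun p _ => Submodule.smul_mem _ _
    (Submodule.subset_span (Set.mem_range_self p))


end

section AbstractMain

lemma cyclic_abstract {K : Type*} [Field K] [CharZero K]
    (d : K →+ K) (hleib : ∀ a b, d (a*b) = d a * b + a * d b)
    (t : K) (htt : d t = 1)
    (E : Type*) [AddCommGroup E] [Module K E] [FiniteDimensional K E]
    (D : E →+ E) (leibniz : ∀ (f : K) (e : E), D (f • e) = d f • e + f • D e) :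
    ∃ s : E, Submodule.span K (Set.range fun i : ℕ => (⇑D)^[i] s) = ⊤ := by
  set n := Module.finrank K E with hn
  let b : Module.Basis (Fin n) K E := Module.finBasis K E
  set A : Matrix (Fin n) (Fin n) K := Matrix.of (fun i j => b.repr (D (b j)) i) with hA
  obtain ⟨z, hz⟩ := core d A t hleib htt
  let Φ : (Fin n → K) ≃ₗ[K] E := b.equivFun.symm
  have key : ∀ u : Fin n → K, D (Φ u) = Φ (nab d A u) := by
    intro u
    have hΦ : ∀ v : Fin n → K, Φ v = ∑ i, v i • b i := fun v => b.equivFun_symm_apply v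
    have hDb : ∀ j, D (b j) = ∑ i, A i j • b i := by
      intro j
      rw [hA]
      exact (b.sum_repr (D (b j))).symm
    rw [hΦ u, map_sum, hΦ (nab d A u)]
    have h1 : ∀ i, D (u i • b i) = d (u i) • b i + u i • D (b i) := fun i => leibniz _ _
    rw [Finset.sum_congr rfl fun i _ => h1 i, Finset.sum_add_distrib]
    have h2 : (∑ i, u i • D (b i)) = ∑ i, (∑ j, A i j * u j) • b i := by
      rw [Finset.sum_congr rfl fun j (_ : j ∈ Finset.univ) => by
        rw [hDb j, Finset.smul_sum]]
      rw [Finset.sum_comm]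
      apply Finset.sum_congr rfl
      intro i _
      rw [Finset.sum_smul]
      apply Finset.sum_congr rfl
      intro j _
      rw [smul_smul, mul_comm]
    rw [h2, ← Finset.sum_add_distrib]
    apply Finset.sum_congr rfl
    intro i _
    rw [nab_apply, add_smul]
  have keyIter : ∀ (p : ℕ) (u : Fin n → K), (⇑D)^[p] (Φ u) = Φ ((⇑(nab d A))^[p] u) := by
    intro p
    induction p with
    | zero => intro u; rfl
    | succ p ih =>
      intro u
      rw [Function.iterate_succ_apply', Function.iterate_succ_apply', ih, key]
  refine ⟨Φ z, ?_⟩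
  rw [eq_top_iff]
  have h3 : Submodule.map (Φ : (Fin n → K) →ₗ[K] E)
      (Submodule.span K (Set.range fun p : Fin n => (⇑(nab d A))^[(p : ℕ)] z)) = ⊤ := by
    rw [hz, Submodule.map_top, LinearMap.range_eq_top]
    exact Φ.surjective
  rw [← h3, Submodule.map_span]
  apply Submodule.span_le.mpr
  rintro _ ⟨_, ⟨p, rfl⟩, rfl⟩
  apply Submodule.subset_span
  exact ⟨(p : ℕ), by simp only [keyIter (p : ℕ) z]; rfl⟩

end AbstractMain

section Laurent2
open HahnSeries

section Laurent
variable {k : Type*} [Field k]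

lemma der_coeff (f : LaurentSeries k) (n : ℤ) :
    (LaurentSeries.derivative k f).coeff n = (n+1) • f.coeff (n+1) := by
  have h := LaurentSeries.derivative_iterate_coeff (R := k) 1 f n
  rw [Function.iterate_one] at h
  rw [h]
  congr 1
  rw [show descPochhammer ℤ 1 = Polynomial.X from by
    rw [descPochhammer_succ_left, descPochhammer_zero]; simp]
  rw [Polynomial.smeval_X]
  exact pow_one _

lemma single_one_mul_coeff (a : ℤ) (x : LaurentSeries k) (n : ℤ) :
    ((single a (1:k)) * x).coeff n = x.coeff (n - a) := by
  conv_lhs => rw [show n = (n - a) + a by ring]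
  rw [coeff_single_mul_add, one_mul]

lemma der_single_mul (a : ℤ) (x : LaurentSeries k) :
    LaurentSeries.derivative k ((single a 1) * x)
      = single a 1 * LaurentSeries.derivative k x
        + single (0:ℤ) ((a : k)) * ((single (a-1) 1) * x) := by
  ext n
  rw [HahnSeries.coeff_add, der_coeff, HahnSeries.coeff_single_zero_mul, single_one_mul_coeff,
    single_one_mul_coeff, single_one_mul_coeff, der_coeff]
  rw [show n + 1 - a = n - a + 1 by ring, show n - (a-1) = n - a + 1 by ring]
  rw [zsmul_eq_mul, zsmul_eq_mul]
  push_cast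
  ring

lemma ofPS_coeff_neg (F : PowerSeries k) (n : ℤ) (h : n < 0) :
    (ofPowerSeries ℤ k F).coeff n = 0 := by
  rw [ofPowerSeries_apply]
  apply embDomain_notin_range
  rintro ⟨m, hm⟩
  simp at hm
  omega

lemma der_ofPS (F : PowerSeries k) :
    LaurentSeries.derivative k (ofPowerSeries ℤ k F)
      = ofPowerSeries ℤ k (PowerSeries.derivativeFun F) := by
  ext n
  rw [der_coeff]
  rcases le_or_gt 0 n with hn | hn
  · obtain ⟨m, rfl⟩ := Int.eq_ofNat_of_zero_le hn
    rw [show ((m : ℤ) + 1) = ((m+1 : ℕ) : ℤ) by push_cast; ring]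
    rw [ofPowerSeries_apply_coeff, ofPowerSeries_apply_coeff]
    change _ = PowerSeries.coeff m (PowerSeries.derivative k F)
    rw [PowerSeries.coeff_derivative]
    rw [zsmul_eq_mul]
    push_cast
    ring
  · rw [ofPS_coeff_neg F.derivativeFun n hn]
    rcases eq_or_lt_of_le (show n + 1 ≤ 0 by omega) with he | hl
    · rw [he, zero_smul]
    · rw [ofPS_coeff_neg F _ hl, smul_zero]

lemma laurent_leibniz (f g : LaurentSeries k) :
    LaurentSeries.derivative k (f * g)
      = LaurentSeries.derivative k f * g + f * LaurentSeries.derivative k g := by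
  have hf := LaurentSeries.single_order_mul_powerSeriesPart f
  have hg := LaurentSeries.single_order_mul_powerSeriesPart g
  set a := f.order
  set b := g.order
  set F := f.powerSeriesPart
  set G := g.powerSeriesPart
  rw [← hf, ← hg]
  have e1 : (single a (1:k)) * (ofPowerSeries ℤ k F) * ((single b (1:k)) * (ofPowerSeries ℤ k G))
      = single (a+b) (1:k) * (ofPowerSeries ℤ k (F * G)) := by
    rw [map_mul]
    rw [show (single a (1:k)) * (ofPowerSeries ℤ k F) * ((single b (1:k)) * (ofPowerSeries ℤ k G))
      = ((single a (1:k)) * (single b (1:k))) * ((ofPowerSeries ℤ k F) * (ofPowerSeries ℤ k G)) by ring]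
    rw [single_mul_single, one_mul]
  rw [e1, der_single_mul, der_single_mul, der_single_mul, der_ofPS, der_ofPS, der_ofPS,
    PowerSeries.derivativeFun_mul, smul_eq_mul, smul_eq_mul, map_add, map_mul, map_mul]
  have e2 : (single (a+b-1) (1:k)) = single (-1 : ℤ) (1:k) * ((single a 1) * (single b 1)) := by
    rw [single_mul_single, single_mul_single, one_mul, one_mul]
    congr 1
    ring
  have e3 : (single (a-1) (1:k)) = single (-1 : ℤ) (1:k) * single a 1 := by
    rw [single_mul_single, one_mul]
    congr 1
    ring
  have e4 : (single (b-1) (1:k)) = single (-1 : ℤ) (1:k) * single b 1 := by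
    rw [single_mul_single, one_mul]
    congr 1
    ring
  have e5 : (single (a+b) (1:k)) = single a 1 * single b 1 := by
    rw [single_mul_single, one_mul]
  rw [e2, e3, e4, e5]
  rw [show (((a+b : ℤ)) : k) = ((a : k) + (b : k)) by push_cast; ring]
  rw [show (single (0:ℤ) ((a:k) + (b:k))) = single (0:ℤ) (a:k) + single (0:ℤ) (b:k) from
    map_add (HahnSeries.single.addMonoidHom (0:ℤ)) _ _]
  rw [show (ofPowerSeries ℤ k) (F * G) = (ofPowerSeries ℤ k) F * (ofPowerSeries ℤ k) G from map_mul _ _ _]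
  ring
end Laurent

section LaurentFinal
variable {k : Type*} [Field k]

lemma der_t : LaurentSeries.derivative k (HahnSeries.single (1:ℤ) (1:k)) = 1 := by
  ext n
  rw [der_coeff, HahnSeries.coeff_single, HahnSeries.coeff_one]
  rcases eq_or_ne n 0 with rfl | h
  · norm_num
  · rw [if_neg (by omega), if_neg h, smul_zero]

end LaurentFinal

/-- Cyclic Vector Lemma: Let `(E, ∇)` be a flat connection on `F = k((t))`
(char k = 0): `E` is a finite-dimensional `F`-vector space and `∇ : E → E` is `k`-linear and
satisfies the Leibniz rule, making `E` a module over the ring `D` of differential operators.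
Then `E` admits a cyclic vector `s`: the `D`-submodule generated by `s`, i.e. the `F`-span of
the iterates `∇^i s`, is all of `E`. -/
theorem exists_cyclic_vector
    (k : Type*) [Field k] [CharZero k]
    (E : Type*) [AddCommGroup E] [Module (LaurentSeries k) E]
    [FiniteDimensional (LaurentSeries k) E]
    [Module k E] [IsScalarTower k (LaurentSeries k) E]
    (D : E →ₗ[k] E)
    (leibniz : ∀ (f : LaurentSeries k) (e : E),
      D (f • e) = LaurentSeries.derivative k f • e + f • D e) :
    ∃ s : E, Submodule.span (LaurentSeries k) (Set.range fun i : ℕ => (⇑D)^[i] s) = ⊤ := by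
  have hC : CharZero (LaurentSeries k) := by
    refine ⟨fun a b hab => ?_⟩
    have h1 : ∀ m : ℕ, (m : LaurentSeries k) = HahnSeries.C ((m : k)) := fun m =>
      (map_natCast (HahnSeries.C : k →+* LaurentSeries k) m).symm
    rw [h1 a, h1 b] at hab
    have h2 : ((a : k)) = ((b : k)) := by
      have h3 := congrArg (fun x : LaurentSeries k => x.coeff 0) hab
      simp only [HahnSeries.C_apply] at h3
      rwa [HahnSeries.coeff_single_same, HahnSeries.coeff_single_same] at h3
    exact_mod_cast h2
  exact cyclic_abstract (K := LaurentSeries k) (LaurentSeries.derivative k).toAddMonoidHom laurent_leibniz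
    (HahnSeries.single (1:ℤ) (1:k)) der_t E D.toAddMonoidHom leibniz
end Laurent2
end
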